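/- Let R be an n×n Hermitian matrix with diagonal elements d ∈ ℝⁿ and eigenvalues λ ∈ ℝⁿ. Then d is majorized by λ, i.e., for every k, the sum of the k largest entries of d is at most the sum of the k largest entries of λ, with equality for k = n. -/

import Mathlib

open Finset

/-- Key combinatorial lemma: a convex-type combination of values with coefficients in `[0,1]`
summing to `k` is bounded by the sum of the `k` largest values. -/
lemma schur_horn_key {n : ℕ} (μ c : Fin n → ℝ) (hc0 : ∀ j, 0 ≤ c j) (hc1 : ∀ j, c j ≤ 1)
    (k : ℕ) (hk : ∑ j, c j = k) :
    ∃ t : Finset (Fin n), t.card = k ∧ ∑ j, μ j * c j ≤ ∑ j ∈ t, μ j := by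
  classical
  have hkn : k ≤ n := by
    have : (k : ℝ) ≤ n := by
      rw [← hk]
      calc ∑ j, c j ≤ ∑ _j : Fin n, (1:ℝ) := Finset.sum_le_sum fun j _ => hc1 j
        _ = n := by simp
    exact_mod_cast this
  rcases Nat.eq_zero_or_pos k with hk0 | hkpos
  · subst hk0
    refine ⟨∅, rfl, ?_⟩
    have hz : ∀ j ∈ Finset.univ, c j = 0 :=
      (Finset.sum_eq_zero_iff_of_nonneg (fun j _ => hc0 j)).mp (by simpa using hk)
    simp only [Finset.sum_empty]
    apply le_of_eq
    apply Finset.sum_eq_zero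
    intro j hj
    rw [hz j hj, mul_zero]
  · have hn : 0 < n := lt_of_lt_of_le hkpos hkn
    set σ := Tuple.sort μ with hσ
    have hmono : Monotone (μ ∘ σ) := Tuple.monotone_sort μ
    set a : Fin n := ⟨n - k, by omega⟩ with ha
    set t : Finset (Fin n) := (Finset.Ici a).image σ with ht
    have hcard : t.card = k := by
      rw [ht, Finset.card_image_of_injective _ σ.injective, Fin.card_Ici]
      simp only [ha]
      omega
    have hprop : ∀ i ∈ t, ∀ j ∉ t, μ j ≤ μ i := by
      intro i hi j hj
      obtain ⟨b, hb, rfl⟩ := Finset.mem_image.mp hi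
      have hb' : a ≤ b := Finset.mem_Ici.mp hb
      have hj' : ¬ a ≤ σ⁻¹ j := by
        intro h
        exact hj (Finset.mem_image.mpr ⟨σ⁻¹ j, Finset.mem_Ici.mpr h, by simp⟩)
      have hle : σ⁻¹ j ≤ b := le_of_lt (lt_of_lt_of_le (lt_of_not_ge hj') hb')
      have := hmono hle
      simpa using this
    have htne : t.Nonempty := Finset.card_pos.mp (by rw [hcard]; exact hkpos)
    obtain ⟨i₀, hi₀t, hm⟩ := Finset.exists_min_image t μ htne
    set m := μ i₀ with hmdef
    refine ⟨t, hcard, ?_⟩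
    have h1 : ∑ j ∈ tᶜ, μ j * c j ≤ m * ∑ j ∈ tᶜ, c j := by
      rw [Finset.mul_sum]
      apply Finset.sum_le_sum
      intro j hj
      have hjt : j ∉ t := by simpa using hj
      exact mul_le_mul_of_nonneg_right (hprop i₀ hi₀t j hjt) (hc0 j)
    have hsplit : ∑ j ∈ t, c j + ∑ j ∈ tᶜ, c j = (k : ℝ) := by
      rw [Finset.sum_add_sum_compl, hk]
    have h2 : ∑ j ∈ tᶜ, c j = ∑ j ∈ t, (1 - c j) := by
      rw [Finset.sum_sub_distrib]
      simp only [Finset.sum_const, hcard, nsmul_eq_mul, mul_one]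
      linarith
    calc ∑ j, μ j * c j
        = ∑ j ∈ t, μ j * c j + ∑ j ∈ tᶜ, μ j * c j :=
          (Finset.sum_add_sum_compl t _).symm
      _ ≤ ∑ j ∈ t, μ j * c j + m * ∑ j ∈ tᶜ, c j := by linarith
      _ = ∑ j ∈ t, (μ j * c j + m * (1 - c j)) := by
          rw [h2, Finset.mul_sum, ← Finset.sum_add_distrib]
      _ ≤ ∑ j ∈ t, (μ j * c j + μ j * (1 - c j)) := by
          apply Finset.sum_le_sum
          intro j hj
          have h1c : 0 ≤ 1 - c j := by linarith [hc1 j]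
          have := mul_le_mul_of_nonneg_right (hm j hj) h1c
          linarith
      _ = ∑ j ∈ t, μ j := by
          apply Finset.sum_congr rfl
          intro j _
          ring

/-- Schur–Horn majorization: the diagonal of a Hermitian matrix is majorized by its
eigenvalues: every `k`-subset sum of the diagonal is bounded by some `k`-subset sum of the
eigenvalues, and the total sums agree. -/
theorem stmt6 (n : ℕ) (R : Matrix (Fin n) (Fin n) ℂ) (hR : R.IsHermitian) :
    (∀ s : Finset (Fin n), ∃ t : Finset (Fin n), t.card = s.card ∧
        ∑ i ∈ s, (R i i).re ≤ ∑ i ∈ t, hR.eigenvalues i) ∧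
      ∑ i : Fin n, (R i i).re = ∑ i : Fin n, hR.eigenvalues i := by
  classical
  set U : Matrix (Fin n) (Fin n) ℂ := (hR.eigenvectorUnitary : Matrix (Fin n) (Fin n) ℂ) with hU
  set lam := hR.eigenvalues with hlam
  have hspec := hR.spectral_theorem
  have hdiag : ∀ i, (R i i).re = ∑ j, lam j * Complex.normSq (U i j) := by
    intro i
    have : R i i = ∑ j, (lam j : ℂ) * Complex.normSq (U i j) := by
      conv_lhs => rw [hspec, Unitary.conjStarAlgAut_apply]
      rw [Matrix.mul_apply]
      apply Finset.sum_congr rfl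
      intro j _
      rw [Matrix.mul_diagonal, Matrix.star_apply]
      have : U i j * star (U i j) = (Complex.normSq (U i j) : ℂ) := by
        rw [Complex.star_def, Complex.mul_conj]
      calc U i j * (lam j : ℂ) * star (U i j) = (lam j : ℂ) * (U i j * star (U i j)) := by ring
        _ = (lam j : ℂ) * Complex.normSq (U i j) := by rw [this]
    rw [this, Complex.re_sum]
    apply Finset.sum_congr rfl
    intro j _
    simp
  have hUmem := hR.eigenvectorUnitary.2
  rw [Matrix.mem_unitaryGroup_iff'] at hUmem
  have hUmem2 := hR.eigenvectorUnitary.2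
  rw [Matrix.mem_unitaryGroup_iff] at hUmem2
  have hcol : ∀ j, ∑ i, Complex.normSq (U i j) = 1 := by
    intro j
    have h := congrFun (congrFun hUmem j) j
    rw [Matrix.mul_apply, Matrix.one_apply_eq] at h
    have : (∑ i, ((Complex.normSq (U i j) : ℂ))) = 1 := by
      rw [← h]
      apply Finset.sum_congr rfl
      intro i _
      rw [Matrix.star_apply]
      rw [mul_comm, Complex.star_def, Complex.mul_conj]
    have := congrArg Complex.re this
    rw [Complex.re_sum] at this
    simpa using this
  have hrow : ∀ i, ∑ j, Complex.normSq (U i j) = 1 := by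
    intro i
    have h := congrFun (congrFun hUmem2 i) i
    rw [Matrix.mul_apply, Matrix.one_apply_eq] at h
    have : (∑ j, ((Complex.normSq (U i j) : ℂ))) = 1 := by
      rw [← h]
      apply Finset.sum_congr rfl
      intro j _
      rw [Matrix.star_apply, Complex.star_def, Complex.mul_conj]
    have := congrArg Complex.re this
    rw [Complex.re_sum] at this
    simpa using this
  constructor
  · intro s
    set c : Fin n → ℝ := fun j => ∑ i ∈ s, Complex.normSq (U i j) with hc
    have hc0 : ∀ j, 0 ≤ c j := fun j => Finset.sum_nonneg fun i _ => Complex.normSq_nonneg _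
    have hc1 : ∀ j, c j ≤ 1 := by
      intro j
      rw [← hcol j]
      exact Finset.sum_le_sum_of_subset_of_nonneg (Finset.subset_univ s)
        (fun i _ _ => Complex.normSq_nonneg _)
    have hsum : ∑ j, c j = (s.card : ℝ) := by
      rw [Finset.sum_comm]
      rw [Finset.sum_congr rfl fun i (_ : i ∈ s) => hrow i]
      simp
    obtain ⟨t, htc, hle⟩ := schur_horn_key lam c hc0 hc1 s.card hsum
    refine ⟨t, htc, ?_⟩
    calc ∑ i ∈ s, (R i i).re = ∑ i ∈ s, ∑ j, lam j * Complex.normSq (U i j) :=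
          Finset.sum_congr rfl fun i _ => hdiag i
      _ = ∑ j, lam j * c j := by
          rw [Finset.sum_comm]
          apply Finset.sum_congr rfl
          intro j _
          rw [hc, Finset.mul_sum]
      _ ≤ ∑ i ∈ t, lam i := hle
  · calc ∑ i, (R i i).re = ∑ i, ∑ j, lam j * Complex.normSq (U i j) :=
          Finset.sum_congr rfl fun i _ => hdiag i
      _ = ∑ j, lam j * ∑ i, Complex.normSq (U i j) := by
          rw [Finset.sum_comm]
          exact Finset.sum_congr rfl fun j _ => (Finset.mul_sum _ _ _).symm
      _ = ∑ i, lam i := by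
          apply Finset.sum_congr rfl
          intro j _
          rw [hcol j, mul_one]
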